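/- Let λ and μ be partitions of an integer k, and let l ≥ 0 be an integer. Let λ' be the partition obtained by inserting l as a new part into λ (reordering to keep parts decreasing), and similarly μ' obtained from μ. Then λ ⊴ μ if and only if λ' ⊴ μ'. -/

import Mathlib

/-- Decreasing enumeration of a multiset of natural numbers. -/
def dsort (M : Multiset ℕ) : List ℕ := (M.sort (· ≤ ·)).reverse

/-- Dominance order on multisets of naturals (of the same size and sum):
partial sums of the decreasing enumerations. -/
def MDom (M M' : Multiset ℕ) : Prop :=
  ∀ d, ((dsort M).take d).sum ≤ ((dsort M').take d).sum

lemma dsort_sorted (M : Multiset ℕ) : (dsort M).Pairwise (· ≥ ·) := by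
  rw [dsort, List.pairwise_reverse]
  exact (Multiset.pairwise_sort M (· ≤ ·)).imp (fun h => h)

lemma dsort_cons (l : ℕ) (M : Multiset ℕ) :
    dsort (l ::ₘ M) = List.orderedInsert (· ≥ ·) l (dsort M) := by
  refine List.Perm.eq_of_pairwise' (dsort_sorted _)
    (List.Pairwise.orderedInsert l _ (dsort_sorted M)) ?_
  rw [← Multiset.coe_eq_coe]
  have h1 : (dsort (l ::ₘ M) : Multiset ℕ) = l ::ₘ M := by
    rw [dsort, Multiset.coe_reverse, Multiset.sort_eq]
  have h2 : (List.orderedInsert (· ≥ ·) l (dsort M) : Multiset ℕ) = l ::ₘ M := by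
    rw [Multiset.coe_eq_coe.2 (List.perm_orderedInsert _ l (dsort M))]
    rw [show ((l :: dsort M : List ℕ) : Multiset ℕ) = l ::ₘ (dsort M : Multiset ℕ) from rfl]
    rw [dsort, Multiset.coe_reverse, Multiset.sort_eq]
  rw [h1, h2]

lemma take_sum_mono (a : List ℕ) {d e : ℕ} (h : d ≤ e) :
    (a.take d).sum ≤ (a.take e).sum := by
  have : a.take d = (a.take e).take d := by
    rw [List.take_take, Nat.min_eq_left h]
  rw [this]
  exact List.Sublist.sum_le_sum (List.take_sublist _ _) (fun x _ => Nat.zero_le x)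

lemma take_sum_le_of_bdd (c : ℕ) : ∀ (a : List ℕ) (d : ℕ), (∀ y ∈ a, y ≤ c) →
    (a.take (d + 1)).sum ≤ c + (a.take d).sum := by
  intro a
  induction a with
  | nil => intro d _; simp
  | cons x t ih =>
    intro d hb
    cases d with
    | zero => simpa using hb x (by simp)
    | succ d =>
      simp only [List.take_succ_cons, List.sum_cons]
      have := ih d (fun y hy => hb y (List.mem_cons_of_mem _ hy))
      omega

lemma orderedInsert_take_sum : ∀ (t : List ℕ), t.Pairwise (· ≥ ·) → ∀ (l d : ℕ),
    ((List.orderedInsert (· ≥ ·) l t).take (d + 1)).sum =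
      max ((t.take (d + 1)).sum) (l + (t.take d).sum) := by
  intro t
  induction t with
  | nil => intro _ l d; simp
  | cons x t ih =>
    intro hs l d
    have hst : t.Pairwise (· ≥ ·) := hs.of_cons
    by_cases h : l ≥ x
    · rw [List.orderedInsert, if_pos h]
      simp only [List.take_succ_cons, List.sum_cons]
      have hb : ∀ y ∈ x :: t, y ≤ l := by
        intro y hy
        rcases List.mem_cons.1 hy with rfl | hy
        · exact h
        · exact le_trans (List.rel_of_pairwise_cons hs hy) h
      have := take_sum_le_of_bdd l (x :: t) d hb
      simp only [List.take_succ_cons, List.sum_cons] at this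
      omega
    · rw [List.orderedInsert, if_neg h]
      push_neg at h
      cases d with
      | zero => simp [Nat.le_of_lt h]
      | succ d =>
        simp only [List.take_succ_cons, List.sum_cons]
        rw [ih hst l d, ← max_add_add_left]
        omega

/-- partial-sum recursion for inserting a part. -/
lemma insert_take_sum (l : ℕ) (M : Multiset ℕ) (d : ℕ) :
    ((dsort (l ::ₘ M)).take (d + 1)).sum =
      max (((dsort M).take (d + 1)).sum) (l + ((dsort M).take d).sum) := by
  rw [dsort_cons]
  exact orderedInsert_take_sum _ (dsort_sorted M) l d

/-- concavity of partial sums of a decreasing list. -/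
lemma take_sum_concave (a : List ℕ) (ha : a.Pairwise (· ≥ ·)) (d : ℕ) :
    (a.take (d + 2)).sum + (a.take d).sum ≤ 2 * (a.take (d + 1)).sum := by
  by_cases h1 : d + 1 < a.length
  · have hd : d < a.length := by omega
    rw [List.sum_take_succ a (d + 1) h1, List.sum_take_succ a d hd]
    have : a[d + 1] ≤ a[d] := by
      have := ha.rel_get_of_lt (a := ⟨d, hd⟩) (b := ⟨d + 1, h1⟩) (by simp)
      simpa using this
    omega
  · have : a.take (d + 2) = a.take (d + 1) := by
      rw [List.take_of_length_le (by omega), List.take_of_length_le (by omega)]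
    rw [this]
    have := take_sum_mono a (show d ≤ d + 1 by omega)
    omega

theorem dominance_insert_part (k l : ℕ) (M M' : Multiset ℕ)
    (hM : M.sum = k) (hM' : M'.sum = k) :
    MDom M M' ↔ MDom (l ::ₘ M) (l ::ₘ M') := by
  constructor
  · intro h d
    cases d with
    | zero => simp
    | succ d =>
      rw [insert_take_sum, insert_take_sum]
      exact max_le_max (h (d + 1)) (Nat.add_le_add_left (h d) l)
  · intro h d
    by_contra hc
    push_neg at hc
    cases d with
    | zero => simp at hc
    | succ e =>
      set A : ℕ → ℕ := fun i => ((dsort M).take i).sum with hA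
      set B : ℕ → ℕ := fun i => ((dsort M').take i).sum with hB
      have hrec : ∀ i, max (A (i + 1)) (l + A i) ≤ max (B (i + 1)) (l + B i) := by
        intro i
        have := h (i + 1)
        rwa [insert_take_sum, insert_take_sum] at this
      have hbad : B (e + 1) < A (e + 1) := hc
      -- from index e+2 : l + A(e+1) ≤ B(e+2)
      have h2 : l + A (e + 1) ≤ B (e + 2) := by
        have := hrec (e + 1)
        have h3 : l + A (e + 1) ≤ max (B (e + 2)) (l + B (e + 1)) :=
          le_trans (le_max_right _ _) this
        omega
      -- concavity of B : B(e+2) - B(e+1) ≤ B(e+1) - B(e)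
      have hconc : B (e + 2) + B e ≤ 2 * B (e + 1) :=
        take_sum_concave _ (dsort_sorted M') e
      -- hence B(e+1) ≥ l + B e + 1 > l + B e, so max at index e+1 is B(e+1)
      have := hrec e
      have hmono : B e ≤ B (e + 1) := take_sum_mono _ (by omega)
      omega
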